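/- Let d ≥ 1, θ ∈ [0, π/2) and M > 0. Let C = (c_{kl}) : ℝ^d → ℂ^{d×d} be measurable with ⟨C(x)ξ, ξ⟩ ∈ Σ_θ (so in particular Re ⟨C(x)ξ, ξ⟩ ≥ 0) and operator norm ‖C(x)‖ ≤ M for all x ∈ ℝ^d and ξ ∈ ℂ^d. Let η : ℝ^d → ℝ be bounded and differentiable with bounded gradient, and let u : ℝ^d → ℂ be continuously differentiable with u and all partial derivatives ∂_k u square-integrable. Then Re 𝔞_C(η u, η u) ≤ 2 · (sup_x |η(x)|)² · Re 𝔞_C(u, u) + 2 M · (sup_x |∇η(x)|)² · ‖u‖_{L²(ℝ^d)}². -/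

import Mathlib

open MeasureTheory Complex
open scoped Real

noncomputable section

/-- The closed sector `Σ_θ = { r e^{iα} : r ≥ 0, α ∈ [−θ, θ] }` in `ℂ`. -/
def sector9 (θ : ℝ) : Set ℂ :=
  {z : ℂ | ∃ r : ℝ, 0 ≤ r ∧ ∃ α : ℝ, |α| ≤ θ ∧ z = (r : ℂ) * Complex.exp (α * Complex.I)}

/-- The quadratic form `⟨C(x)ξ, ξ⟩ = Σ_{k,l} c_{kl}(x) ξ_k conj(ξ_l)`. -/
def quadForm9 {d : ℕ} (C : EuclideanSpace ℝ (Fin d) → Matrix (Fin d) (Fin d) ℂ)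
    (x : EuclideanSpace ℝ (Fin d)) (ξ : Fin d → ℂ) : ℂ :=
  ∑ k, ∑ l, C x k l * ξ k * (starRingEnd ℂ) (ξ l)

/-- The `k`-th partial derivative of a function on `ℝ^d`. -/
def pd9 {d : ℕ} (k : Fin d) (u : EuclideanSpace ℝ (Fin d) → ℂ)
    (x : EuclideanSpace ℝ (Fin d)) : ℂ :=
  fderiv ℝ u x (EuclideanSpace.single k (1 : ℝ))

/-- The sesquilinear form `𝔞_C(u,v) = Σ_{k,l} ∫ c_{kl} (∂_k u) conj(∂_l v)`. -/
def formA9 {d : ℕ} (C : EuclideanSpace ℝ (Fin d) → Matrix (Fin d) (Fin d) ℂ)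
    (u v : EuclideanSpace ℝ (Fin d) → ℂ) : ℂ :=
  ∑ k, ∑ l, ∫ x, C x k l * pd9 k u x * (starRingEnd ℂ) (pd9 l v x)

/-! ### Auxiliary lemmas -/

theorem myIntMul9 {α : Type*} [MeasurableSpace α] {μ : Measure α} {f g : α → ℂ}
    (hf : MemLp f 2 μ) (hg : MemLp g 2 μ) : Integrable (fun x => f x * g x) μ := by
  have h : (1 : ENNReal)/1 = 1/2 + 1/2 := by
    rw [ENNReal.div_add_div_same, div_one, one_add_one_eq_two]
    exact (ENNReal.div_self two_ne_zero ENNReal.ofNat_ne_top).symm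
  have := hg.smul (φ := f) (r := 1) hf
  rw [memLp_one_iff_integrable] at this
  exact this

theorem myConj9 {α : Type*} [MeasurableSpace α] {μ : Measure α} {f : α → ℂ}
    (hf : MemLp f 2 μ) : MemLp (fun x => (starRingEnd ℂ) (f x)) 2 μ := by
  refine hf.of_le_mul (c := 1) (RCLike.continuous_conj.comp_aestronglyMeasurable hf.1) ?_
  filter_upwards with x
  simp

theorem quad_eq_inner9 {d : ℕ} (C : EuclideanSpace ℝ (Fin d) → Matrix (Fin d) (Fin d) ℂ)
    (x : EuclideanSpace ℝ (Fin d)) (ξ : Fin d → ℂ) :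
    quadForm9 C x ξ =
      @inner ℂ _ _ ((WithLp.equiv 2 _).symm (fun k => (starRingEnd ℂ) (ξ k)))
        (Matrix.toEuclideanCLM (𝕜 := ℂ) (C x)
          ((WithLp.equiv 2 _).symm (fun k => (starRingEnd ℂ) (ξ k)))) := by
  rw [WithLp.equiv_symm_apply, Matrix.toEuclideanCLM_toLp]
  simp only [PiLp.inner_apply, PiLp.toLp_apply, RCLike.inner_apply,
    starRingEnd_self_apply]
  rw [quadForm9]
  congr 1; ext l
  simp [Matrix.toLin'_apply, Matrix.mulVec, dotProduct, Finset.mul_sum, Finset.sum_mul]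
  congr 1; ext k
  ring

theorem norm_equiv_symm_sq9 {d : ℕ} (v : Fin d → ℂ) :
    ‖((WithLp.equiv 2 _).symm v : EuclideanSpace ℂ (Fin d))‖ ^ 2 = ∑ k, ‖v k‖ ^ 2 := by
  rw [EuclideanSpace.norm_eq]
  rw [Real.sq_sqrt (Finset.sum_nonneg fun k _ => sq_nonneg _)]
  simp

theorem quad_norm_le9 {d : ℕ} (C : EuclideanSpace ℝ (Fin d) → Matrix (Fin d) (Fin d) ℂ)
    (x : EuclideanSpace ℝ (Fin d)) (ξ : Fin d → ℂ) (M : ℝ)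
    (hM : ‖Matrix.toEuclideanCLM (𝕜 := ℂ) (C x)‖ ≤ M) :
    ‖quadForm9 C x ξ‖ ≤ M * ∑ k, ‖ξ k‖ ^ 2 := by
  rw [quad_eq_inner9]
  set ζ : EuclideanSpace ℂ (Fin d) :=
    (WithLp.equiv 2 _).symm (fun k => (starRingEnd ℂ) (ξ k)) with hζ
  have h1 : ‖ζ‖ ^ 2 = ∑ k, ‖ξ k‖ ^ 2 := by
    rw [hζ, norm_equiv_symm_sq9]; simp
  calc ‖(inner ℂ ζ (Matrix.toEuclideanCLM (𝕜 := ℂ) (C x) ζ) : ℂ)‖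
      ≤ ‖ζ‖ * ‖Matrix.toEuclideanCLM (𝕜 := ℂ) (C x) ζ‖ := norm_inner_le_norm _ _
    _ ≤ ‖ζ‖ * (‖Matrix.toEuclideanCLM (𝕜 := ℂ) (C x)‖ * ‖ζ‖) := by
        gcongr; exact ContinuousLinearMap.le_opNorm _ _
    _ ≤ ‖ζ‖ * (M * ‖ζ‖) := by gcongr
    _ = M * ‖ζ‖ ^ 2 := by ring
    _ = M * ∑ k, ‖ξ k‖ ^ 2 := by rw [h1]

theorem comp_le_norm9 {d : ℕ} (v : EuclideanSpace ℂ (Fin d)) (k : Fin d) : ‖v k‖ ≤ ‖v‖ := by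
  have h : ‖v k‖ ^ 2 ≤ ‖v‖ ^ 2 := by
    rw [EuclideanSpace.norm_eq, Real.sq_sqrt (Finset.sum_nonneg fun i _ => sq_nonneg _)]
    exact Finset.single_le_sum (f := fun i => ‖v i‖ ^ 2) (fun i _ => sq_nonneg _)
      (Finset.mem_univ k)
  calc ‖v k‖ = Real.sqrt (‖v k‖ ^ 2) := (Real.sqrt_sq (norm_nonneg _)).symm
    _ ≤ Real.sqrt (‖v‖ ^ 2) := Real.sqrt_le_sqrt h
    _ = ‖v‖ := Real.sqrt_sq (norm_nonneg _)

theorem entry_norm_le9 {d : ℕ} (A : Matrix (Fin d) (Fin d) ℂ) (M : ℝ)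
    (hM : ‖Matrix.toEuclideanCLM (𝕜 := ℂ) A‖ ≤ M) (k l : Fin d) : ‖A k l‖ ≤ M := by
  have h : A k l
      = (Matrix.toEuclideanCLM (𝕜 := ℂ) A ((WithLp.equiv 2 _).symm (Pi.single l 1))) k := by
    rw [WithLp.equiv_symm_apply, Matrix.toEuclideanCLM_toLp]
    simp [Matrix.toLin'_apply, Matrix.mulVec_single]
  rw [h]
  calc ‖(Matrix.toEuclideanCLM (𝕜 := ℂ) A ((WithLp.equiv 2 _).symm (Pi.single l 1))) k‖
      ≤ ‖Matrix.toEuclideanCLM (𝕜 := ℂ) A ((WithLp.equiv 2 _).symm (Pi.single l 1))‖ :=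
        comp_le_norm9 _ _
    _ ≤ ‖Matrix.toEuclideanCLM (𝕜 := ℂ) A‖
          * ‖((WithLp.equiv 2 _).symm (Pi.single l 1) : EuclideanSpace ℂ (Fin d))‖ :=
        ContinuousLinearMap.le_opNorm _ _
    _ ≤ M * 1 := by
        gcongr
        · exact (norm_nonneg _).trans hM
        · rw [EuclideanSpace.norm_eq]
          rw [Real.sqrt_le_one]
          rw [Finset.sum_eq_single l]
          · simp
          · intro i _ hi; simp [Pi.single_apply, hi]
          · simp
    _ = M := mul_one M

theorem grad_sum_sq_le9 {d : ℕ} (f : EuclideanSpace ℝ (Fin d) →L[ℝ] ℝ) (Bg : ℝ) (hf : ‖f‖ ≤ Bg) :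
    ∑ k, (f (EuclideanSpace.single k (1:ℝ))) ^ 2 ≤ Bg ^ 2 := by
  have hBg : 0 ≤ Bg := (norm_nonneg f).trans hf
  set v : EuclideanSpace ℝ (Fin d) :=
    ∑ k, (f (EuclideanSpace.single k (1:ℝ))) • (EuclideanSpace.single k (1:ℝ)) with hv
  have hfv : f v = ∑ k, (f (EuclideanSpace.single k (1:ℝ))) ^ 2 := by
    rw [hv, map_sum]
    congr 1; ext k
    rw [f.map_smul]; simp [smul_eq_mul, sq]
  have hnv : ‖v‖ ^ 2 = ∑ k, (f (EuclideanSpace.single k (1:ℝ))) ^ 2 := by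
    have : ∀ i, v i = f (EuclideanSpace.single i (1:ℝ)) := by
      intro i
      have h0 : v i = ∑ k, ((f (EuclideanSpace.single k (1:ℝ)))
          • (EuclideanSpace.single k (1:ℝ)) : EuclideanSpace ℝ (Fin d)) i := by
        rw [hv, WithLp.ofLp_sum, Finset.sum_apply]
      rw [h0]
      simp [EuclideanSpace.single_apply]
    rw [EuclideanSpace.norm_eq, Real.sq_sqrt (Finset.sum_nonneg fun i _ => sq_nonneg _)]
    congr 1; ext i; rw [this i]; exact _root_.sq_abs _
  have h1 : ∑ k, (f (EuclideanSpace.single k (1:ℝ))) ^ 2 ≤ Bg * ‖v‖ := by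
    rw [← hfv]
    calc f v ≤ ‖f v‖ := le_abs_self _
      _ ≤ ‖f‖ * ‖v‖ := f.le_opNorm v
      _ ≤ Bg * ‖v‖ := by gcongr
  by_cases hz : ‖v‖ = 0
  · rw [← hnv, hz]; simpa using sq_nonneg Bg
  · have hvpos : 0 < ‖v‖ := lt_of_le_of_ne (norm_nonneg v) (Ne.symm hz)
    have h2 : ‖v‖ ^ 2 ≤ Bg * ‖v‖ := by rw [hnv]; exact h1
    have h3 : ‖v‖ ≤ Bg := by nlinarith
    rw [← hnv]
    nlinarith

theorem pd9_mul9 {d : ℕ} (η : EuclideanSpace ℝ (Fin d) → ℝ) (hηd : Differentiable ℝ η)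
    (u : EuclideanSpace ℝ (Fin d) → ℂ) (hu : Differentiable ℝ u) (k : Fin d)
    (x : EuclideanSpace ℝ (Fin d)) :
    pd9 k (fun y => (η y : ℂ) * u y) x
      = (η x : ℂ) * pd9 k u x
          + u x * ((fderiv ℝ η x (EuclideanSpace.single k (1:ℝ)) : ℝ) : ℂ) := by
  have hc : DifferentiableAt ℝ (fun y => ((η y : ℝ) : ℂ)) x :=
    Complex.ofRealCLM.differentiable.differentiableAt.comp x (hηd x)
  have hfc : fderiv ℝ (fun y => ((η y : ℝ) : ℂ)) x = Complex.ofRealCLM.comp (fderiv ℝ η x) :=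
    (Complex.ofRealCLM.hasFDerivAt.comp x (hηd x).hasFDerivAt).fderiv
  rw [pd9, fderiv_fun_mul hc (hu x)]
  simp [hfc, pd9, smul_eq_mul]

theorem quad_par9 {d : ℕ} (C : EuclideanSpace ℝ (Fin d) → Matrix (Fin d) (Fin d) ℂ)
    (x : EuclideanSpace ℝ (Fin d)) (a b : Fin d → ℂ) :
    quadForm9 C x (fun k => a k + b k) + quadForm9 C x (fun k => a k - b k)
      = 2 * quadForm9 C x a + 2 * quadForm9 C x b := by
  simp only [quadForm9, Finset.mul_sum, ← Finset.sum_add_distrib]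
  refine Finset.sum_congr rfl fun k _ => ?_
  refine Finset.sum_congr rfl fun l _ => ?_
  simp only [map_add, map_sub]
  ring

theorem quad_smul_real9 {d : ℕ} (C : EuclideanSpace ℝ (Fin d) → Matrix (Fin d) (Fin d) ℂ)
    (x : EuclideanSpace ℝ (Fin d)) (r : ℝ) (ξ : Fin d → ℂ) :
    quadForm9 C x (fun k => (r : ℂ) * ξ k) = ((r^2 : ℝ) : ℂ) * quadForm9 C x ξ := by
  simp only [quadForm9, Finset.mul_sum]
  refine Finset.sum_congr rfl fun k _ => ?_
  refine Finset.sum_congr rfl fun l _ => ?_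
  simp only [map_mul, Complex.conj_ofReal]
  push_cast
  ring

theorem sector_re_nonneg9 {θ : ℝ} (hθ : θ < Real.pi / 2) {z : ℂ} (hz : z ∈ sector9 θ) :
    0 ≤ z.re := by
  obtain ⟨r, hr, α, hα, rfl⟩ := hz
  rw [Complex.re_ofReal_mul, Complex.exp_ofReal_mul_I_re]
  exact mul_nonneg hr (Real.cos_nonneg_of_mem_Icc
    ⟨by linarith [neg_abs_le α, abs_nonneg α], by linarith [le_abs_self α]⟩)

/-- `Re 𝔞_C(ηu, ηu) ≤ 2 (sup|η|)² Re 𝔞_C(u,u) + 2 M (sup|∇η|)² ‖u‖₂²`. -/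
theorem stmt9 (d : ℕ) (hd : 1 ≤ d) (θ M : ℝ)
    (hθ : θ ∈ Set.Ico (0 : ℝ) (Real.pi / 2)) (hM : 0 < M)
    (C : EuclideanSpace ℝ (Fin d) → Matrix (Fin d) (Fin d) ℂ)
    (hmeas : ∀ k l : Fin d, Measurable fun x => C x k l)
    (hsec : ∀ x ξ, quadForm9 C x ξ ∈ sector9 θ)
    (hnorm : ∀ x, ‖Matrix.toEuclideanCLM (𝕜 := ℂ) (C x)‖ ≤ M)
    (η : EuclideanSpace ℝ (Fin d) → ℝ) (Bη Bg : ℝ)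
    (hηb : ∀ x, |η x| ≤ Bη) (hηd : Differentiable ℝ η)
    (hηg : ∀ x, ‖fderiv ℝ η x‖ ≤ Bg)
    (u : EuclideanSpace ℝ (Fin d) → ℂ) (hu : ContDiff ℝ 1 u)
    (hu2 : MemLp u 2 (volume : Measure (EuclideanSpace ℝ (Fin d))))
    (hdu2 : ∀ k : Fin d, MemLp (pd9 k u) 2 (volume : Measure (EuclideanSpace ℝ (Fin d)))) :
    (formA9 C (fun x => (η x : ℂ) * u x) (fun x => (η x : ℂ) * u x)).re ≤
      2 * Bη ^ 2 * (formA9 C u u).re + 2 * M * Bg ^ 2 * ∫ x, ‖u x‖ ^ 2 := by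
  classical
  set w : EuclideanSpace ℝ (Fin d) → ℂ := fun x => (η x : ℂ) * u x with hw
  have hud : Differentiable ℝ u := hu.differentiable one_ne_zero
  have hBη : 0 ≤ Bη := (abs_nonneg _).trans (hηb 0)
  have hBg : 0 ≤ Bg := (norm_nonneg _).trans (hηg 0)
  -- abbreviations
  set a : EuclideanSpace ℝ (Fin d) → Fin d → ℂ := fun x k => (η x : ℂ) * pd9 k u x with ha
  set b : EuclideanSpace ℝ (Fin d) → Fin d → ℂ :=
    fun x k => u x * ((fderiv ℝ η x (EuclideanSpace.single k (1:ℝ)) : ℝ) : ℂ) with hb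
  have hwpd : ∀ k x, pd9 k w x = a x k + b x k := fun k x => pd9_mul9 η hηd u hud k x
  -- continuity / measurability
  have hpdu_cont : ∀ k, Continuous (pd9 k u) := by
    intro k
    have h1 : Continuous (fderiv ℝ u) := hu.continuous_fderiv one_ne_zero
    exact (ContinuousLinearMap.apply ℝ ℂ (EuclideanSpace.single k (1:ℝ))).continuous.comp h1
  have hgrad_meas : ∀ k : Fin d,
      Measurable (fun x => fderiv ℝ η x (EuclideanSpace.single k (1:ℝ))) := fun k =>
    measurable_fderiv_apply_const ℝ η _
  have hpdw_meas : ∀ k, AEStronglyMeasurable (pd9 k w)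
      (volume : Measure (EuclideanSpace ℝ (Fin d))) := fun k =>
    (measurable_fderiv_apply_const ℝ w _).aestronglyMeasurable
  -- bounds on the gradient components
  have hgradb : ∀ (x : EuclideanSpace ℝ (Fin d)) (k : Fin d),
      |fderiv ℝ η x (EuclideanSpace.single k (1:ℝ))| ≤ Bg := by
    intro x k
    calc |fderiv ℝ η x (EuclideanSpace.single k (1:ℝ))|
        = ‖fderiv ℝ η x (EuclideanSpace.single k (1:ℝ))‖ := rfl
      _ ≤ ‖fderiv ℝ η x‖ * ‖(EuclideanSpace.single k (1:ℝ) : EuclideanSpace ℝ (Fin d))‖ :=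
          (fderiv ℝ η x).le_opNorm _
      _ ≤ Bg * 1 := by
          refine mul_le_mul (hηg x) ?_ (norm_nonneg _) ((norm_nonneg _).trans (hηg x))
          rw [EuclideanSpace.norm_single]
          norm_num
      _ = Bg := mul_one _
  -- MemLp facts
  have mem_a : ∀ k, MemLp (fun x => a x k) 2
      (volume : Measure (EuclideanSpace ℝ (Fin d))) := by
    intro k
    refine (hdu2 k).of_le_mul (c := Bη)
      ((Complex.continuous_ofReal.comp hηd.continuous).aestronglyMeasurable.mul
        (hpdu_cont k).aestronglyMeasurable) ?_
    filter_upwards with x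
    rw [ha]
    simp only [norm_mul, Complex.norm_real]
    refine mul_le_mul_of_nonneg_right ?_ (norm_nonneg _)
    rw [Real.norm_eq_abs]; exact hηb x
  have mem_b : ∀ k, MemLp (fun x => b x k) 2
      (volume : Measure (EuclideanSpace ℝ (Fin d))) := by
    intro k
    refine hu2.of_le_mul (c := Bg)
      (hu.continuous.aestronglyMeasurable.mul
        ((Complex.measurable_ofReal.comp (hgrad_meas k)).aestronglyMeasurable)) ?_
    filter_upwards with x
    rw [hb]
    simp only [norm_mul, Complex.norm_real]
    rw [mul_comm]
    refine mul_le_mul_of_nonneg_right ?_ (norm_nonneg _)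
    rw [Real.norm_eq_abs]; exact hgradb x k
  have mem_w : ∀ k, MemLp (pd9 k w) 2
      (volume : Measure (EuclideanSpace ℝ (Fin d))) := by
    intro k
    have : pd9 k w = fun x => a x k + b x k := funext (hwpd k)
    rw [this]
    exact (mem_a k).add (mem_b k)
  -- integrability of the individual terms
  have intTerm : ∀ (v1 v2 : EuclideanSpace ℝ (Fin d) → ℂ),
      MemLp v1 2 (volume : Measure (EuclideanSpace ℝ (Fin d))) →
      MemLp v2 2 (volume : Measure (EuclideanSpace ℝ (Fin d))) →
      ∀ k l : Fin d, Integrable (fun x => C x k l * v1 x * (starRingEnd ℂ) (v2 x))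
        (volume : Measure (EuclideanSpace ℝ (Fin d))) := by
    intro v1 v2 h1 h2 k l
    have hmul : Integrable (fun x => v1 x * (starRingEnd ℂ) (v2 x))
        (volume : Measure (EuclideanSpace ℝ (Fin d))) := myIntMul9 h1 (myConj9 h2)
    have := hmul.bdd_mul (hmeas k l).aestronglyMeasurable
      (Filter.Eventually.of_forall fun x => entry_norm_le9 _ M (hnorm x) k l)
    simpa [mul_assoc] using this
  have intW : ∀ k l : Fin d, Integrable
      (fun x => C x k l * pd9 k w x * (starRingEnd ℂ) (pd9 l w x))
      (volume : Measure (EuclideanSpace ℝ (Fin d))) := fun k l =>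
    intTerm _ _ (mem_w k) (mem_w l) k l
  have intU : ∀ k l : Fin d, Integrable
      (fun x => C x k l * pd9 k u x * (starRingEnd ℂ) (pd9 l u x))
      (volume : Measure (EuclideanSpace ℝ (Fin d))) := fun k l =>
    intTerm _ _ (hdu2 k) (hdu2 l) k l
  -- the real part of the form as an integral
  have hre' : ∀ (f : EuclideanSpace ℝ (Fin d) → ℂ),
      Integrable f (volume : Measure (EuclideanSpace ℝ (Fin d))) →
      (∫ x, f x).re = ∫ x, (f x).re := by
    intro f hf
    have := integral_re (μ := (volume : Measure (EuclideanSpace ℝ (Fin d)))) hf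
    simpa using this.symm
  have key : ∀ v : EuclideanSpace ℝ (Fin d) → ℂ,
      (∀ k l : Fin d, Integrable
        (fun x => C x k l * pd9 k v x * (starRingEnd ℂ) (pd9 l v x))
        (volume : Measure (EuclideanSpace ℝ (Fin d)))) →
      (formA9 C v v).re = ∫ x, (quadForm9 C x (fun k => pd9 k v x)).re := by
    intro v hint
    have hint' : ∀ k l : Fin d, Integrable
        (fun x => (C x k l * pd9 k v x * (starRingEnd ℂ) (pd9 l v x)).re)
        (volume : Measure (EuclideanSpace ℝ (Fin d))) := by
      intro k l
      have := (hint k l).re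
      simpa using this
    calc (formA9 C v v).re
        = ∑ k, ∑ l, (∫ x, C x k l * pd9 k v x * (starRingEnd ℂ) (pd9 l v x)).re := by
          rw [formA9, Complex.re_sum]
          exact Finset.sum_congr rfl fun k _ => Complex.re_sum _ _
      _ = ∑ k, ∑ l, ∫ x, (C x k l * pd9 k v x * (starRingEnd ℂ) (pd9 l v x)).re :=
          Finset.sum_congr rfl fun k _ => Finset.sum_congr rfl fun l _ => hre' _ (hint k l)
      _ = ∑ k, ∫ x, ∑ l, (C x k l * pd9 k v x * (starRingEnd ℂ) (pd9 l v x)).re :=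
          Finset.sum_congr rfl fun k _ =>
            (integral_finset_sum _ (fun l _ => hint' k l)).symm
      _ = ∫ x, ∑ k, ∑ l, (C x k l * pd9 k v x * (starRingEnd ℂ) (pd9 l v x)).re :=
          (integral_finset_sum _ (fun k _ =>
            integrable_finset_sum _ (fun l _ => hint' k l))).symm
      _ = ∫ x, (quadForm9 C x (fun k => pd9 k v x)).re := by
          have heq2 : (fun x => (quadForm9 C x (fun k => pd9 k v x)).re)
              = fun x => ∑ k, ∑ l, (C x k l * pd9 k v x * (starRingEnd ℂ) (pd9 l v x)).re := by
            funext x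
            rw [quadForm9, Complex.re_sum]
            exact Finset.sum_congr rfl fun k _ => Complex.re_sum _ _
          rw [heq2]
  -- nonnegativity of the real part of the quadratic form
  have hqnn : ∀ (x : EuclideanSpace ℝ (Fin d)) (ξ : Fin d → ℂ),
      0 ≤ (quadForm9 C x ξ).re := fun x ξ => sector_re_nonneg9 hθ.2 (hsec x ξ)
  -- pointwise inequality
  have hpt : ∀ x : EuclideanSpace ℝ (Fin d),
      (quadForm9 C x (fun k => pd9 k w x)).re
        ≤ 2 * Bη ^ 2 * (quadForm9 C x (fun k => pd9 k u x)).re + 2 * M * Bg ^ 2 * ‖u x‖ ^ 2 := by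
    intro x
    have hfun : (fun k => pd9 k w x) = fun k => a x k + b x k := funext fun k => hwpd k x
    have hpar := quad_par9 C x (a x) (b x)
    have hq : quadForm9 C x (fun k => pd9 k w x)
        = 2 * quadForm9 C x (a x) + 2 * quadForm9 C x (b x)
          - quadForm9 C x (fun k => a x k - b x k) := by
      rw [hfun]
      linear_combination hpar
    have hre : (quadForm9 C x (fun k => pd9 k w x)).re
        = 2 * (quadForm9 C x (a x)).re + 2 * (quadForm9 C x (b x)).re
          - (quadForm9 C x (fun k => a x k - b x k)).re := by
      rw [hq]
      simp
    have h1 : (quadForm9 C x (a x)).re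
        ≤ Bη ^ 2 * (quadForm9 C x (fun k => pd9 k u x)).re := by
      have hsm : quadForm9 C x (a x)
          = (((η x) ^ 2 : ℝ) : ℂ) * quadForm9 C x (fun k => pd9 k u x) :=
        quad_smul_real9 C x (η x) _
      rw [hsm, Complex.re_ofReal_mul]
      have hη2 : (η x) ^ 2 ≤ Bη ^ 2 := by
        have h := hηb x
        nlinarith [_root_.sq_abs (η x), abs_nonneg (η x)]
      exact mul_le_mul_of_nonneg_right hη2 (hqnn x _)
    have h2 : (quadForm9 C x (b x)).re ≤ M * (Bg ^ 2 * ‖u x‖ ^ 2) := by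
      have hle : (quadForm9 C x (b x)).re ≤ ‖quadForm9 C x (b x)‖ := by
        exact Complex.re_le_norm _
      have hbk : ∀ k : Fin d, ‖b x k‖ ^ 2
          = (fderiv ℝ η x (EuclideanSpace.single k (1:ℝ))) ^ 2 * ‖u x‖ ^ 2 := by
        intro k
        rw [hb]
        simp only [norm_mul, Complex.norm_real, mul_pow, Real.norm_eq_abs, _root_.sq_abs]
        ring
      have hb2 : ∑ k, ‖b x k‖ ^ 2 ≤ Bg ^ 2 * ‖u x‖ ^ 2 := by
        calc ∑ k, ‖b x k‖ ^ 2
            = (∑ k, (fderiv ℝ η x (EuclideanSpace.single k (1:ℝ))) ^ 2) * ‖u x‖ ^ 2 := by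
              rw [Finset.sum_mul]
              exact Finset.sum_congr rfl fun k _ => hbk k
          _ ≤ Bg ^ 2 * ‖u x‖ ^ 2 :=
              mul_le_mul_of_nonneg_right (grad_sum_sq_le9 _ Bg (hηg x)) (sq_nonneg _)
      calc (quadForm9 C x (b x)).re ≤ ‖quadForm9 C x (b x)‖ := hle
        _ ≤ M * ∑ k, ‖b x k‖ ^ 2 := quad_norm_le9 C x _ M (hnorm x)
        _ ≤ M * (Bg ^ 2 * ‖u x‖ ^ 2) := mul_le_mul_of_nonneg_left hb2 hM.le
    have h3 : 0 ≤ (quadForm9 C x (fun k => a x k - b x k)).re := hqnn x _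
    rw [hre]
    linarith
  -- integrability of the real parts
  have intGw : Integrable (fun x => (quadForm9 C x (fun k => pd9 k w x)).re)
      (volume : Measure (EuclideanSpace ℝ (Fin d))) := by
    have heq : (fun x => (quadForm9 C x (fun k => pd9 k w x)).re)
        = fun x => ∑ k, ∑ l, (C x k l * pd9 k w x * (starRingEnd ℂ) (pd9 l w x)).re := by
      funext x
      rw [quadForm9, Complex.re_sum]
      exact Finset.sum_congr rfl fun k _ => Complex.re_sum _ _
    rw [heq]
    exact integrable_finset_sum _ (fun k _ => integrable_finset_sum _ (fun l _ => by
      have := (intW k l).re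
      simpa using this))
  have intGu : Integrable (fun x => (quadForm9 C x (fun k => pd9 k u x)).re)
      (volume : Measure (EuclideanSpace ℝ (Fin d))) := by
    have heq : (fun x => (quadForm9 C x (fun k => pd9 k u x)).re)
        = fun x => ∑ k, ∑ l, (C x k l * pd9 k u x * (starRingEnd ℂ) (pd9 l u x)).re := by
      funext x
      rw [quadForm9, Complex.re_sum]
      exact Finset.sum_congr rfl fun k _ => Complex.re_sum _ _
    rw [heq]
    exact integrable_finset_sum _ (fun k _ => integrable_finset_sum _ (fun l _ => by
      have := (intU k l).re
      simpa using this))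
  have intnu : Integrable (fun x => ‖u x‖ ^ 2)
      (volume : Measure (EuclideanSpace ℝ (Fin d))) := by
    have h := hu2.integrable_norm_rpow two_ne_zero ENNReal.ofNat_ne_top
    refine h.congr ?_
    filter_upwards with x
    rw [ENNReal.toReal_ofNat]
    rw [show ((2:ℝ)) = ((2:ℕ):ℝ) by norm_num, Real.rpow_natCast]
  have intRHS : Integrable (fun x =>
      2 * Bη ^ 2 * (quadForm9 C x (fun k => pd9 k u x)).re + 2 * M * Bg ^ 2 * ‖u x‖ ^ 2)
      (volume : Measure (EuclideanSpace ℝ (Fin d))) :=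
    (intGu.const_mul _).add (intnu.const_mul _)
  calc (formA9 C w w).re
      = ∫ x, (quadForm9 C x (fun k => pd9 k w x)).re := key w intW
    _ ≤ ∫ x, (2 * Bη ^ 2 * (quadForm9 C x (fun k => pd9 k u x)).re
          + 2 * M * Bg ^ 2 * ‖u x‖ ^ 2) := integral_mono intGw intRHS hpt
    _ = 2 * Bη ^ 2 * (∫ x, (quadForm9 C x (fun k => pd9 k u x)).re)
          + 2 * M * Bg ^ 2 * ∫ x, ‖u x‖ ^ 2 := by
        rw [integral_add (intGu.const_mul _) (intnu.const_mul _),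
          integral_const_mul, integral_const_mul]
    _ = 2 * Bη ^ 2 * (formA9 C u u).re + 2 * M * Bg ^ 2 * ∫ x, ‖u x‖ ^ 2 := by
        rw [key u intU]
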